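/- arXiv:0810.1487 — 8 statements merged into one kernel-verified Lean document; each statement's English description precedes it below -/
import Mathlib

section
/- Let C be a 2-group, i.e. a monoidal category which is a groupoid and in which every object x admits an object y with x ⊗ y ≅ 𝟙. Write A := End(𝟙) (a group, since C is a groupoid), and for an object x define l_x, r_x : A → End(x) by l_x(b) = λ_x ∘ (b ⊗ id_x) ∘ λ_x⁻¹ and r_x(a) = ρ_x ∘ (id_x ⊗ a) ∘ ρ_x⁻¹, where λ_x : 𝟙 ⊗ x ≅ x and ρ_x : x ⊗ 𝟙 ≅ x are the unitors. Then: for every object x and every a ∈ A there is a unique element τ_x(a) ∈ A with l_x(τ_x(a)) = r_x(a); the resulting maps τ_x : A → A satisfy (i) if x ≅ x' then τ_x = τ_{x'}, and (ii) τ_𝟙 = id and τ_x ∘ τ_{x'} = τ_{x ⊗ x'}. In particular each τ_x is a group automorphism of A, so x ↦ τ_x induces an action of the group π₀(C) of isomorphism classes of objects on A = π₁(C). -/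
open CategoryTheory MonoidalCategory


namespace GerbalAux

variable {C : Type*} [Groupoid C] [MonoidalCategory C]

noncomputable def tensorRightEquiv (x y : C) (e : x ⊗ y ≅ 𝟙_ C) (f : y ⊗ x ≅ 𝟙_ C) : C ≌ C :=
  CategoryTheory.Equivalence.mk (tensorRight x) (tensorRight y)
    ((rightUnitorNatIso C).symm ≪≫ (tensoringRight C).mapIso e.symm ≪≫ tensorRightTensor x y)
    ((tensorRightTensor y x).symm ≪≫ (tensoringRight C).mapIso f ≪≫ rightUnitorNatIso C)

noncomputable def tensorLeftEquiv (x y : C) (e : x ⊗ y ≅ 𝟙_ C) (f : y ⊗ x ≅ 𝟙_ C) : C ≌ C :=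
  CategoryTheory.Equivalence.mk (tensorLeft x) (tensorLeft y)
    ((leftUnitorNatIso C).symm ≪≫ (tensoringLeft C).mapIso f.symm ≪≫ tensorLeftTensor y x)
    ((tensorLeftTensor x y).symm ≪≫ (tensoringLeft C).mapIso e ≪≫ leftUnitorNatIso C)

def conjEquiv {X Y : C} (i : X ≅ Y) : End X ≃ End Y where
  toFun f := i.inv ≫ f ≫ i.hom
  invFun g := i.hom ≫ g ≫ i.inv
  left_inv f := by simp
  right_inv g := by simp

noncomputable def LEquiv (x y : C) (e : x ⊗ y ≅ 𝟙_ C) (f : y ⊗ x ≅ 𝟙_ C) :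
    End (𝟙_ C) ≃ End x :=
  ((tensorRightEquiv x y e f).fullyFaithfulFunctor.homEquiv
    (X := 𝟙_ C) (Y := 𝟙_ C)).trans (conjEquiv (λ_ x))

noncomputable def REquiv (x y : C) (e : x ⊗ y ≅ 𝟙_ C) (f : y ⊗ x ≅ 𝟙_ C) :
    End (𝟙_ C) ≃ End x :=
  ((tensorLeftEquiv x y e f).fullyFaithfulFunctor.homEquiv
    (X := 𝟙_ C) (Y := 𝟙_ C)).trans (conjEquiv (ρ_ x))

lemma LEquiv_apply (x y : C) (e : x ⊗ y ≅ 𝟙_ C) (f : y ⊗ x ≅ 𝟙_ C) (b : End (𝟙_ C)) :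
    LEquiv x y e f b = (λ_ x).inv ≫ (b ▷ x) ≫ (λ_ x).hom := rfl

lemma REquiv_apply (x y : C) (e : x ⊗ y ≅ 𝟙_ C) (f : y ⊗ x ≅ 𝟙_ C) (a : End (𝟙_ C)) :
    REquiv x y e f a = (ρ_ x).inv ≫ (x ◁ a) ≫ (ρ_ x).hom := rfl

lemma exists_two_sided (h2grp : ∀ x : C, ∃ y : C, Nonempty ((x ⊗ y) ≅ 𝟙_ C)) (x : C) :
    ∃ y : C, Nonempty ((x ⊗ y) ≅ 𝟙_ C) ∧ Nonempty ((y ⊗ x) ≅ 𝟙_ C) := by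
  obtain ⟨y, ⟨e⟩⟩ := h2grp x
  obtain ⟨z, ⟨f⟩⟩ := h2grp y
  have g : z ≅ x :=
    (λ_ z).symm ≪≫ whiskerRightIso e.symm z ≪≫ α_ x y z ≪≫ whiskerLeftIso x f ≪≫ ρ_ x
  exact ⟨y, ⟨e⟩, ⟨whiskerLeftIso y g.symm ≪≫ f⟩⟩

-- categorical computation lemmas
lemma lmap_one (b : End (𝟙_ C)) :
    (λ_ (𝟙_ C)).inv ≫ (b ▷ 𝟙_ C) ≫ (λ_ (𝟙_ C)).hom = b := by
  have h : (λ_ (𝟙_ C)) = (ρ_ (𝟙_ C)) := Iso.ext unitors_equal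
  rw [h]; simp

lemma rmap_one (a : End (𝟙_ C)) :
    (ρ_ (𝟙_ C)).inv ≫ ((𝟙_ C) ◁ a) ≫ (ρ_ (𝟙_ C)).hom = a := by
  have h : (λ_ (𝟙_ C)) = (ρ_ (𝟙_ C)) := Iso.ext unitors_equal
  rw [← h]; simp

lemma lmap_conj {x x' : C} (φ : x ≅ x') (b : End (𝟙_ C)) :
    (λ_ x').inv ≫ (b ▷ x') ≫ (λ_ x').hom
      = φ.inv ≫ ((λ_ x).inv ≫ (b ▷ x) ≫ (λ_ x).hom) ≫ φ.hom := by
  have h := whisker_exchange b φ.hom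
  simp only [id_whiskerLeft, Category.assoc] at h
  rw [Iso.eq_inv_comp, ← cancel_epi (λ_ x).hom, reassoc_of% h]
  simp

lemma rmap_conj {x x' : C} (φ : x ≅ x') (a : End (𝟙_ C)) :
    (ρ_ x').inv ≫ (x' ◁ a) ≫ (ρ_ x').hom
      = φ.inv ≫ ((ρ_ x).inv ≫ (x ◁ a) ≫ (ρ_ x).hom) ≫ φ.hom := by
  have h := (whisker_exchange φ.hom a).symm
  simp only [MonoidalCategory.whiskerRight_id, Category.assoc] at h
  rw [Iso.eq_inv_comp, ← cancel_epi (ρ_ x).hom, reassoc_of% h]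
  simp

lemma lmap_tensor (x x' : C) (b : End (𝟙_ C)) :
    (λ_ (x ⊗ x')).inv ≫ (b ▷ (x ⊗ x')) ≫ (λ_ (x ⊗ x')).hom
      = ((λ_ x).inv ≫ (b ▷ x) ≫ (λ_ x).hom) ▷ x' := by
  simp

lemma rmap_tensor (x x' : C) (a : End (𝟙_ C)) :
    (ρ_ (x ⊗ x')).inv ≫ ((x ⊗ x') ◁ a) ≫ (ρ_ (x ⊗ x')).hom
      = x ◁ ((ρ_ x').inv ≫ (x' ◁ a) ≫ (ρ_ x').hom) := by
  simp

lemma lmap_mid (x x' : C) (b : End (𝟙_ C)) :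
    x ◁ ((λ_ x').inv ≫ (b ▷ x') ≫ (λ_ x').hom)
      = ((ρ_ x).inv ≫ (x ◁ b) ≫ (ρ_ x).hom) ▷ x' := by
  simp

end GerbalAux

open GerbalAux in
/-- For a 2-group (a monoidal groupoid in which every object is tensor-invertible up to
isomorphism), with `A := End (𝟙_ C)` and
`l_x(b) := λ_x ∘ (b ▷ x) ∘ λ_x⁻¹`, `r_x(a) := ρ_x ∘ (x ◁ a) ∘ ρ_x⁻¹`,
there is a unique `τ_x(a)` with `l_x (τ_x a) = r_x a`; the maps `τ_x` depend only on the
isomorphism class of `x`, satisfy `τ_𝟙 = id` and `τ_x ∘ τ_{x'} = τ_{x ⊗ x'}`, and each `τ_x`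
is a group automorphism of `A`. -/
theorem gerbal_two_group_pi0_action_on_pi1
    {C : Type*} [Groupoid C] [MonoidalCategory C]
    (h2grp : ∀ x : C, ∃ y : C, Nonempty ((x ⊗ y) ≅ 𝟙_ C)) :
    ∃ τ : C → End (𝟙_ C) → End (𝟙_ C),
      (∀ (x : C) (a : End (𝟙_ C)),
        ((λ_ x).inv ≫ (τ x a ▷ x) ≫ (λ_ x).hom
            = (ρ_ x).inv ≫ (x ◁ a) ≫ (ρ_ x).hom) ∧
        (∀ b : End (𝟙_ C),
          ((λ_ x).inv ≫ (b ▷ x) ≫ (λ_ x).hom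
              = (ρ_ x).inv ≫ (x ◁ a) ≫ (ρ_ x).hom) → b = τ x a)) ∧
      (∀ x x' : C, (x ≅ x') → τ x = τ x') ∧
      (τ (𝟙_ C) = id) ∧
      (∀ x x' : C, τ x ∘ τ x' = τ (x ⊗ x')) ∧
      (∀ x : C, Function.Bijective (τ x) ∧
        ∀ a b : End (𝟙_ C), τ x (a * b) = τ x a * τ x b) := by
  classical
  choose y hy hy' using exists_two_sided h2grp
  let e : ∀ x : C, x ⊗ y x ≅ 𝟙_ C := fun x => (hy x).some
  let f : ∀ x : C, y x ⊗ x ≅ 𝟙_ C := fun x => (hy' x).some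
  let L : ∀ x : C, End (𝟙_ C) ≃ End x := fun x => LEquiv x (y x) (e x) (f x)
  let R : ∀ x : C, End (𝟙_ C) ≃ End x := fun x => REquiv x (y x) (e x) (f x)
  have hL : ∀ (x : C) (b : End (𝟙_ C)),
      L x b = (λ_ x).inv ≫ (b ▷ x) ≫ (λ_ x).hom := fun x b => rfl
  have hR : ∀ (x : C) (a : End (𝟙_ C)),
      R x a = (ρ_ x).inv ≫ (x ◁ a) ≫ (ρ_ x).hom := fun x a => rfl
  have hLmul : ∀ (x : C) (c d : End (𝟙_ C)), L x (c * d) = L x c * L x d := by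
    intro x c d
    rw [hL, hL, hL, End.mul_def c d, comp_whiskerRight]
    simp [End.mul_def]
  have hRmul : ∀ (x : C) (c d : End (𝟙_ C)), R x (c * d) = R x c * R x d := by
    intro x c d
    rw [hR, hR, hR, End.mul_def c d, MonoidalCategory.whiskerLeft_comp]
    simp [End.mul_def]
  refine ⟨fun x a => (L x).symm (R x a), ?_, ?_, ?_, ?_, ?_⟩
  · intro x a
    have hkey : L x ((L x).symm (R x a)) = R x a := (L x).apply_symm_apply _
    constructor
    · rw [← hL, ← hR]; exact hkey
    · intro b hb
      have : L x b = R x a := by rw [hL, hR]; exact hb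
      rw [Equiv.eq_symm_apply]; exact this
  · intro x x' φ
    funext a
    have hb : L x ((L x).symm (R x a)) = R x a := (L x).apply_symm_apply _
    symm
    rw [Equiv.symm_apply_eq]
    rw [hL, hR, lmap_conj φ, rmap_conj φ, ← hL, ← hR, hb]
  · funext a
    rw [Equiv.symm_apply_eq, hL, hR, lmap_one, rmap_one]
    rfl
  · intro x x'
    funext a
    show (L x).symm (R x ((L x').symm (R x' a))) = (L (x ⊗ x')).symm (R (x ⊗ x') a)
    symm
    rw [Equiv.symm_apply_eq]
    have h1 : L (x ⊗ x') ((L x).symm (R x ((L x').symm (R x' a))))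
        = (L x ((L x).symm (R x ((L x').symm (R x' a))))) ▷ x' := by
      rw [hL, hL, lmap_tensor]
    rw [h1, (L x).apply_symm_apply, hR (x ⊗ x') a, rmap_tensor, ← hR x']
    conv_lhs => rw [← (L x').apply_symm_apply ((R x') a)]
    rw [hL x', lmap_mid, ← hR x]
  · intro x
    refine ⟨((R x).trans (L x).symm).bijective, ?_⟩
    intro a b
    have h2 : R x (a * b) = L x (((L x).symm (R x a)) * ((L x).symm (R x b))) := by
      rw [hLmul, (L x).apply_symm_apply, (L x).apply_symm_apply, hRmul]
    show (L x).symm (R x (a * b)) = _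
    rw [h2, Equiv.symm_apply_apply]
end

section
/- Let G be a group, C a category, and (F, c) a gerbal action datum for G on C, i.e. functors F_g : C → C for each g ∈ G, each an equivalence of categories, together with natural isomorphisms c(g,h) : F_g ∘ F_h ≅ F_{gh}. Suppose ρ_g : Aut(𝟭_C) → Aut(𝟭_C) is induced by F_g for each g ∈ G (i.e. (ρ_g(u))_{F_g(X)} = F_g(u_X) for all u and all objects X). Then there exists a unique function a : G × G × G → Aut(𝟭_C) such that for all g1, g2, g3 ∈ G and all objects X, a(g1,g2,g3)_{F_{g1g2g3}(X)} ∘ c(g1g2,g3)_X ∘ c(g1,g2)_{F_{g3}(X)} = c(g1,g2g3)_X ∘ F_{g1}(c(g2,g3)_X), and this a satisfies the ρ-twisted 3-cocycle identity: ρ_{g1}(a(g2,g3,g4)) · a(g1,g2g3,g4) · a(g1,g2,g3) = a(g1g2,g3,g4) · a(g1,g2,g3g4) for all g1,g2,g3,g4 ∈ G. -/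
open CategoryTheory

namespace GerbalCocycleAux
variable {C : Type*} [Category C]

theorem id_app_nat (u : Aut (𝟭 C)) {X Y : C} (f : X ⟶ Y) :
    u.hom.app X ≫ f = f ≫ u.hom.app Y := by
  simpa using (u.hom.naturality f).symm

theorem id_app_comm (u v : Aut (𝟭 C)) (X : C) :
    u.hom.app X ≫ v.hom.app X = v.hom.app X ≫ u.hom.app X :=
  id_app_nat u (v.hom.app X)

theorem aut_mul_hom_app (u v : Aut (𝟭 C)) (X : C) :
    (u * v).hom.app X = v.hom.app X ≫ u.hom.app X := rfl

/-- Transfer an automorphism of an equivalence `K` to an automorphism of the identity. -/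
noncomputable def toAut (K : C ⥤ C) [K.IsEquivalence] (θ : K ≅ K) : Aut (𝟭 C) :=
  ((Functor.whiskeringLeft C C C).obj K).preimageIso
    (Functor.rightUnitor K ≪≫ θ ≪≫ (Functor.rightUnitor K).symm)

theorem toAut_app (K : C ⥤ C) [K.IsEquivalence] (θ : K ≅ K) (X : C) :
    (toAut K θ).hom.app (K.obj X) = θ.hom.app X := by
  have h := ((Functor.whiskeringLeft C C C).obj K).map_preimage
    (Functor.rightUnitor K ≪≫ θ ≪≫ (Functor.rightUnitor K).symm).hom
  have h2 := NatTrans.congr_app h X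
  simpa [toAut] using h2

theorem aut_ext (K : C ⥤ C) [K.IsEquivalence] {u v : Aut (𝟭 C)}
    (h : ∀ X, u.hom.app (K.obj X) = v.hom.app (K.obj X)) : u = v := by
  ext Y
  have e := K.objObjPreimageIso Y
  have hu : u.hom.app Y = e.inv ≫ u.hom.app (K.obj (K.objPreimage Y)) ≫ e.hom := by
    rw [id_app_nat u e.hom]; simp
  have hv : v.hom.app Y = e.inv ≫ v.hom.app (K.obj (K.objPreimage Y)) ≫ e.hom := by
    rw [id_app_nat v e.hom]; simp
  rw [hu, hv, h]

variable {G : Type*} [Group G]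

/-- The associativity comparison automorphism of `F (g1*g2*g3)`. -/
def theta (F : G → C ⥤ C) (c : ∀ g h : G, (F h ⋙ F g) ≅ F (g * h)) (g1 g2 g3 : G) :
    F (g1 * g2 * g3) ≅ F (g1 * g2 * g3) :=
  (Functor.associator _ _ _ ≪≫ Functor.isoWhiskerLeft (F g3) (c g1 g2) ≪≫ c (g1 * g2) g3).symm ≪≫
    (Functor.isoWhiskerRight (c g2 g3) (F g1) ≪≫ c g1 (g2 * g3)) ≪≫ eqToIso (by rw [mul_assoc])

theorem theta_hom_app (F : G → C ⥤ C) (c : ∀ g h : G, (F h ⋙ F g) ≅ F (g * h))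
    (g1 g2 g3 : G) (X : C) :
    (theta F c g1 g2 g3).hom.app X =
      (c (g1 * g2) g3).inv.app X ≫ (c g1 g2).inv.app ((F g3).obj X) ≫
        (F g1).map ((c g2 g3).hom.app X) ≫ (c g1 (g2 * g3)).hom.app X ≫
          eqToHom (by rw [mul_assoc]) := by
  simp [theta]

noncomputable def aDef (F : G → C ⥤ C) (hF : ∀ g, (F g).IsEquivalence)
    (c : ∀ g h : G, (F h ⋙ F g) ≅ F (g * h)) (g1 g2 g3 : G) : Aut (𝟭 C) :=
  letI := hF (g1 * g2 * g3)
  toAut (F (g1 * g2 * g3)) (theta F c g1 g2 g3)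

theorem aDef_eq (F : G → C ⥤ C) (hF : ∀ g, (F g).IsEquivalence)
    (c : ∀ g h : G, (F h ⋙ F g) ≅ F (g * h)) (g1 g2 g3 : G) (X : C) :
    (c g1 g2).hom.app ((F g3).obj X) ≫ (c (g1 * g2) g3).hom.app X ≫
        (aDef F hF c g1 g2 g3).hom.app ((F (g1 * g2 * g3)).obj X)
      = (F g1).map ((c g2 g3).hom.app X) ≫ (c g1 (g2 * g3)).hom.app X ≫
          eqToHom (by simp only [Functor.id_obj]; rw [mul_assoc]) := by
  letI := hF (g1 * g2 * g3)
  rw [aDef, toAut_app, theta_hom_app]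
  simp

theorem c_congr (F : G → C ⥤ C) (c : ∀ g h : G, (F h ⋙ F g) ≅ F (g * h))
    {h h' : G} (e : h = h') (g : G) (X : C) :
    eqToHom (show (F h).obj ((F g).obj X) = (F h').obj ((F g).obj X) by rw [e]) ≫
        (c h' g).hom.app X
      = (c h g).hom.app X ≫ eqToHom (by rw [e]) := by
  subst e; simp

theorem c_congr₂ (F : G → C ⥤ C) (c : ∀ g h : G, (F h ⋙ F g) ≅ F (g * h))
    {h h' : G} (e : h = h') (g : G) (X : C) :
    eqToHom (show (F g).obj ((F h).obj X) = (F g).obj ((F h').obj X) by rw [e]) ≫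
        (c g h').hom.app X
      = (c g h).hom.app X ≫ eqToHom (by rw [e]) := by
  subst e; simp

set_option maxHeartbeats 1000000 in
theorem cocycle (F : G → C ⥤ C) (hF : ∀ g, (F g).IsEquivalence)
    (c : ∀ g h : G, (F h ⋙ F g) ≅ F (g * h))
    (ρ : G → Aut (𝟭 C) → Aut (𝟭 C))
    (hρ : ∀ (g : G) (u : Aut (𝟭 C)) (X : C),
      (ρ g u).hom.app ((F g).obj X) = (F g).map (u.hom.app X))
    (g1 g2 g3 g4 : G) :
    ρ g1 (aDef F hF c g2 g3 g4) * aDef F hF c g1 (g2 * g3) g4 * aDef F hF c g1 g2 g3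
      = aDef F hF c (g1 * g2) g3 g4 * aDef F hF c g1 g2 (g3 * g4) := by
  letI := hF (g1 * g2 * g3 * g4)
  apply aut_ext (F (g1 * g2 * g3 * g4))
  intro X
  simp only [aut_mul_hom_app, Iso.trans_hom, NatTrans.comp_app, Functor.id_obj]
  have key : ∀ u v : (𝟭 C).obj ((F (g1 * g2 * g3 * g4)).obj X) ⟶
      (𝟭 C).obj ((F (g1 * g2 * g3 * g4)).obj X),
      ((c g1 g2).hom.app ((F g3).obj ((F g4).obj X)) ≫
        (c (g1 * g2) g3).hom.app ((F g4).obj X) ≫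
        (c (g1 * g2 * g3) g4).hom.app X ≫ u
        = (c g1 g2).hom.app ((F g3).obj ((F g4).obj X)) ≫
        (c (g1 * g2) g3).hom.app ((F g4).obj X) ≫
        (c (g1 * g2 * g3) g4).hom.app X ≫ v) → u = v := by
    intro u v h
    rw [cancel_epi, cancel_epi, cancel_epi] at h
    exact h
  apply key
  simp only [← Category.assoc]
  simp only [Category.assoc]

  -- RHS chase
  rw [id_app_comm (aDef F hF c g1 g2 (g3 * g4)) (aDef F hF c (g1 * g2) g3 g4)
      ((F (g1 * g2 * g3 * g4)).obj X)]
  rw [reassoc_of% (aDef_eq F hF c (g1 * g2) g3 g4 X)]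
  simp only [Functor.id_obj]
  have n1 := (c g1 g2).hom.naturality ((c g3 g4).hom.app X)
  simp only [Functor.comp_obj, Functor.comp_map] at n1
  rw [← reassoc_of% n1]
  rw [← (id_app_nat (aDef F hF c g1 g2 (g3 * g4))
      (eqToHom (show (F (g1 * g2 * (g3 * g4))).obj X = (F (g1 * g2 * g3 * g4)).obj X by
        rw [← mul_assoc (g1*g2) g3 g4])))]
  rw [reassoc_of% (aDef_eq F hF c g1 g2 (g3 * g4) X)]
  simp only [Functor.id_obj, eqToHom_trans]
  -- LHS chase
  have n2 := id_app_nat (aDef F hF c g1 g2 g3) ((c (g1 * g2 * g3) g4).hom.app X)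
  simp only [Functor.comp_obj, Functor.id_obj] at n2
  rw [← reassoc_of% n2]
  rw [reassoc_of% (aDef_eq F hF c g1 g2 g3 ((F g4).obj X))]
  rw [reassoc_of% (c_congr F c (mul_assoc g1 g2 g3).symm g4 X)]
  rw [← reassoc_of% (id_app_nat (aDef F hF c g1 (g2 * g3) g4)
      (eqToHom (show (F (g1 * (g2 * g3) * g4)).obj X = (F (g1 * g2 * g3 * g4)).obj X by
        rw [mul_assoc g1 g2 g3])))]
  rw [reassoc_of% (aDef_eq F hF c g1 (g2 * g3) g4 X)]
  simp only [Functor.id_obj, eqToHom_trans_assoc]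
  rw [← id_app_nat (ρ g1 (aDef F hF c g2 g3 g4))
      (eqToHom (show (F (g1 * (g2 * g3 * g4))).obj X = (F (g1 * g2 * g3 * g4)).obj X by
        rw [mul_assoc g1 g2 g3, mul_assoc g1 (g2*g3) g4, mul_assoc g2 g3 g4]))]
  have n3 := id_app_nat (ρ g1 (aDef F hF c g2 g3 g4)) ((c g1 (g2 * g3 * g4)).hom.app X)
  simp only [Functor.comp_obj, Functor.id_obj] at n3
  rw [← reassoc_of% n3]
  rw [hρ g1 (aDef F hF c g2 g3 g4) ((F (g2 * g3 * g4)).obj X)]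
  have h5 := aDef_eq F hF c g2 g3 g4 X
  simp only [Functor.id_obj] at h5
  have E5 := congrArg (F g1).map h5
  simp only [Functor.map_comp, eqToHom_map, Category.assoc] at E5
  rw [reassoc_of% E5]
  rw [reassoc_of% (c_congr₂ F c (mul_assoc g2 g3 g4).symm g1 X)]
  simp only [eqToHom_trans]







theorem a_unique (F : G → C ⥤ C) (hF : ∀ g, (F g).IsEquivalence)
    (c : ∀ g h : G, (F h ⋙ F g) ≅ F (g * h)) (a' : G → G → G → Aut (𝟭 C))
    (h : ∀ (g1 g2 g3 : G) (X : C),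
      (c g1 g2).hom.app ((F g3).obj X) ≫ (c (g1 * g2) g3).hom.app X ≫
          (a' g1 g2 g3).hom.app ((F (g1 * g2 * g3)).obj X)
        = (F g1).map ((c g2 g3).hom.app X) ≫ (c g1 (g2 * g3)).hom.app X ≫
            eqToHom (by simp only [Functor.id_obj]; rw [mul_assoc])) :
    a' = aDef F hF c := by
  funext g1 g2 g3
  letI := hF (g1 * g2 * g3)
  apply aut_ext (F (g1 * g2 * g3))
  intro X
  have h1 := h g1 g2 g3 X
  have h2 := aDef_eq F hF c g1 g2 g3 X
  have h3 := h1.trans h2.symm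
  rwa [cancel_epi, cancel_epi] at h3

end GerbalCocycleAux

open GerbalCocycleAux in
/-- Given a gerbal action datum `(F, c)` of a group `G` on a category `C` (equivalences
`F g` with natural isomorphisms `c g h : F h ⋙ F g ≅ F (g * h)`), and `ρ g` induced by
`F g` on `Aut (𝟭 C)`, there is a unique `a : G → G → G → Aut (𝟭 C)` satisfying the
associativity-comparison equation, and it satisfies the `ρ`-twisted 3-cocycle identity. -/
theorem gerbal_action_three_cocycle
    {G : Type*} [Group G] {C : Type*} [Category C]
    (F : G → C ⥤ C) (hF : ∀ g, (F g).IsEquivalence)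
    (c : ∀ g h : G, (F h ⋙ F g) ≅ F (g * h))
    (ρ : G → Aut (𝟭 C) → Aut (𝟭 C))
    (hρ : ∀ (g : G) (u : Aut (𝟭 C)) (X : C),
      (ρ g u).hom.app ((F g).obj X) = (F g).map (u.hom.app X)) :
    ∃ a : G → G → G → Aut (𝟭 C),
      (∀ (g1 g2 g3 : G) (X : C),
        (c g1 g2).hom.app ((F g3).obj X) ≫ (c (g1 * g2) g3).hom.app X ≫
            (a g1 g2 g3).hom.app ((F (g1 * g2 * g3)).obj X)
          = (F g1).map ((c g2 g3).hom.app X) ≫ (c g1 (g2 * g3)).hom.app X ≫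
              eqToHom (by simp only [Functor.id_obj]; rw [mul_assoc])) ∧
      (∀ (g1 g2 g3 g4 : G),
        ρ g1 (a g2 g3 g4) * a g1 (g2 * g3) g4 * a g1 g2 g3
          = a (g1 * g2) g3 g4 * a g1 g2 (g3 * g4)) ∧
      (∀ a' : G → G → G → Aut (𝟭 C),
        (∀ (g1 g2 g3 : G) (X : C),
          (c g1 g2).hom.app ((F g3).obj X) ≫ (c (g1 * g2) g3).hom.app X ≫
              (a' g1 g2 g3).hom.app ((F (g1 * g2 * g3)).obj X)
            = (F g1).map ((c g2 g3).hom.app X) ≫ (c g1 (g2 * g3)).hom.app X ≫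
                eqToHom (by simp only [Functor.id_obj]; rw [mul_assoc])) → a' = a) :=
  ⟨aDef F hF c, aDef_eq F hF c, cocycle F hF c ρ hρ, fun a' ha' => a_unique F hF c a' ha'⟩
end

section
/- Let G be a group, C a category, and let (F, c) and (F, c') be two gerbal action data for G on C with the same underlying equivalences F_g, and suppose ρ_g : Aut(𝟭_C) → Aut(𝟭_C) is induced by F_g for each g. Suppose d : G × G → Aut(𝟭_C) is such that c'(g,h)_X = c(g,h)_X ∘ d(g,h)_{F_g(F_h(X))} for all g,h ∈ G and all objects X. Let a and a' be the 3-cochains associated to (F,c) and (F,c') respectively (characterized by a(g1,g2,g3)_{F_{g1g2g3}(X)} ∘ c(g1g2,g3)_X ∘ c(g1,g2)_{F_{g3}(X)} = c(g1,g2g3)_X ∘ F_{g1}(c(g2,g3)_X), and likewise for a', c'). Then for all g1,g2,g3 ∈ G: a'(g1,g2,g3) · a(g1,g2,g3)⁻¹ = ρ_{g1}(d(g2,g3)) · d(g1,g2g3) · d(g1g2,g3)⁻¹ · d(g1,g2)⁻¹; that is, the two cocycles differ by the ρ-twisted coboundary of d, so they define the same cohomology class. -/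
open CategoryTheory

section Aux

variable {C : Type*} [Category C]

private lemma natcomm (η : 𝟭 C ⟶ 𝟭 C) {A B : C} (f : A ⟶ B) :
    f ≫ η.app B = η.app A ≫ f := by
  simpa using η.naturality f

private lemma aut_comm (u v : Aut (𝟭 C)) : u * v = v * u := by
  apply Iso.ext; apply NatTrans.ext; funext X
  simp only [Aut.Aut_mul_def, Iso.trans_hom, NatTrans.comp_app]
  exact natcomm u.hom (v.hom.app X)

private lemma aut_ext_of_essSurj (T : C ⥤ C) [T.EssSurj] (u v : Aut (𝟭 C))
    (h : ∀ X, u.hom.app (T.obj X) = v.hom.app (T.obj X)) : u = v := by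
  apply Iso.ext; apply NatTrans.ext; funext Y
  have e := T.objObjPreimageIso Y
  have h1 := natcomm u.hom e.hom
  have h2 := natcomm v.hom e.hom
  rw [h (T.objPreimage Y)] at h1
  rw [← h2] at h1
  exact (Iso.cancel_iso_hom_left e _ _).mp h1

private lemma cg' {A : Type*} [CommGroup A] (x y z w v u : A)
    (h : w * z * x = u * v * y) : x * y⁻¹ = u * v * z⁻¹ * w⁻¹ := by
  have hx : x = z⁻¹ * (w⁻¹ * (u * v * y)) := by rw [← h]; group
  rw [mul_inv_eq_iff_eq_mul, hx]
  simp [mul_comm, mul_left_comm, mul_assoc]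

end Aux

/-- If two gerbal action data `(F, c)` and `(F, c')` for `G` on `C` differ by
`d : G × G → Aut (𝟭 C)`, then the associated 3-cochains `a`, `a'` differ by the
`ρ`-twisted coboundary of `d`. -/
theorem gerbal_action_cocycle_well_defined
    {G : Type*} [Group G] {C : Type*} [Category C]
    (F : G → C ⥤ C) (hF : ∀ g, (F g).IsEquivalence)
    (c c' : ∀ g h : G, (F h ⋙ F g) ≅ F (g * h))
    (ρ : G → Aut (𝟭 C) → Aut (𝟭 C))
    (hρ : ∀ (g : G) (u : Aut (𝟭 C)) (X : C),
      (ρ g u).hom.app ((F g).obj X) = (F g).map (u.hom.app X))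
    (d : G → G → Aut (𝟭 C))
    (hd : ∀ (g h : G) (X : C),
      (c' g h).hom.app X
        = (d g h).hom.app ((F g).obj ((F h).obj X)) ≫ (c g h).hom.app X)
    (a a' : G → G → G → Aut (𝟭 C))
    (ha : ∀ (g1 g2 g3 : G) (X : C),
      (c g1 g2).hom.app ((F g3).obj X) ≫ (c (g1 * g2) g3).hom.app X ≫
          (a g1 g2 g3).hom.app ((F (g1 * g2 * g3)).obj X)
        = (F g1).map ((c g2 g3).hom.app X) ≫ (c g1 (g2 * g3)).hom.app X ≫
            eqToHom (by simp only [Functor.id_obj]; rw [mul_assoc]))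
    (ha' : ∀ (g1 g2 g3 : G) (X : C),
      (c' g1 g2).hom.app ((F g3).obj X) ≫ (c' (g1 * g2) g3).hom.app X ≫
          (a' g1 g2 g3).hom.app ((F (g1 * g2 * g3)).obj X)
        = (F g1).map ((c' g2 g3).hom.app X) ≫ (c' g1 (g2 * g3)).hom.app X ≫
            eqToHom (by simp only [Functor.id_obj]; rw [mul_assoc])) :
    ∀ g1 g2 g3 : G,
      a' g1 g2 g3 * (a g1 g2 g3)⁻¹
        = ρ g1 (d g2 g3) * d g1 (g2 * g3) * (d (g1 * g2) g3)⁻¹ * (d g1 g2)⁻¹ := by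
  intro g1 g2 g3
  haveI := hF (g1 * g2 * g3)
  -- the key component computation
  have key : d g1 g2 * d (g1 * g2) g3 * a' g1 g2 g3
      = ρ g1 (d g2 g3) * d g1 (g2 * g3) * a g1 g2 g3 := by
    apply aut_ext_of_essSurj (F (g1 * g2 * g3))
    intro X
    have H := ha' g1 g2 g3 X
    rw [hd g1 g2, hd (g1 * g2) g3, hd g2 g3, hd g1 (g2 * g3)] at H
    simp only [Functor.map_comp, Category.assoc] at H
    rw [← hρ g1 (d g2 g3) ((F g2).obj ((F g3).obj X))] at H
    -- push the natural automorphism components to the end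
    rw [← natcomm (d g1 g2).hom, ← natcomm (d (g1 * g2) g3).hom,
        ← natcomm (ρ g1 (d g2 g3)).hom, ← natcomm (d g1 (g2 * g3)).hom] at H
    simp only [Category.assoc] at H
    rw [← reassoc_of% (ha g1 g2 g3 X)] at H
    rw [cancel_epi ((c g1 g2).hom.app ((F g3).obj X)),
        cancel_epi ((c (g1 * g2) g3).hom.app X)] at H
    simp only [Aut.Aut_mul_def, Iso.trans_hom, NatTrans.comp_app]
    exact H
  letI : CommGroup (Aut (𝟭 C)) :=
    { (inferInstance : Group (Aut (𝟭 C))) with mul_comm := aut_comm }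
  exact cg' _ _ _ _ _ _ key
end

section
/- Let G be a group, C a category, (F, c) a gerbal action datum for G on C, ρ_g induced by F_g for each g, and a the associated 3-cochain (characterized by a(g1,g2,g3)_{F_{g1g2g3}(X)} ∘ c(g1g2,g3)_X ∘ c(g1,g2)_{F_{g3}(X)} = c(g1,g2g3)_X ∘ F_{g1}(c(g2,g3)_X)). Suppose there exists d : G × G → Aut(𝟭_C) with a(g1,g2,g3) = ρ_{g1}(d(g2,g3)) · d(g1,g2g3) · d(g1g2,g3)⁻¹ · d(g1,g2)⁻¹ for all g1,g2,g3 (i.e. a is a ρ-twisted coboundary). Then the modified isomorphisms c'(g,h)_X := c(g,h)_X ∘ (d(g,h)⁻¹)_{F_g(F_h(X))} upgrade the gerbal action to a genuine one: for all g1,g2,g3 ∈ G and all objects X, c'(g1g2,g3)_X ∘ c'(g1,g2)_{F_{g3}(X)} = c'(g1,g2g3)_X ∘ F_{g1}(c'(g2,g3)_X). -/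
open CategoryTheory

/-- If the 3-cochain `a` of a gerbal action datum `(F, c)` is a `ρ`-twisted coboundary of
`d`, then the modified isomorphisms `c'(g,h)_X := c(g,h)_X ∘ (d(g,h)⁻¹)_{F_g F_h X}`
upgrade the gerbal action to a genuine action. -/
theorem gerbal_action_upgrade_to_genuine
    {G : Type*} [Group G] {C : Type*} [Category C]
    (F : G → C ⥤ C) (hF : ∀ g, (F g).IsEquivalence)
    (c : ∀ g h : G, (F h ⋙ F g) ≅ F (g * h))
    (ρ : G → Aut (𝟭 C) → Aut (𝟭 C))
    (hρ : ∀ (g : G) (u : Aut (𝟭 C)) (X : C),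
      (ρ g u).hom.app ((F g).obj X) = (F g).map (u.hom.app X))
    (a : G → G → G → Aut (𝟭 C))
    (ha : ∀ (g1 g2 g3 : G) (X : C),
      (c g1 g2).hom.app ((F g3).obj X) ≫ (c (g1 * g2) g3).hom.app X ≫
          (a g1 g2 g3).hom.app ((F (g1 * g2 * g3)).obj X)
        = (F g1).map ((c g2 g3).hom.app X) ≫ (c g1 (g2 * g3)).hom.app X ≫
            eqToHom (by simp only [Functor.id_obj]; rw [mul_assoc]))
    (d : G → G → Aut (𝟭 C))
    (hd : ∀ g1 g2 g3 : G,
      a g1 g2 g3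
        = ρ g1 (d g2 g3) * d g1 (g2 * g3) * (d (g1 * g2) g3)⁻¹ * (d g1 g2)⁻¹)
    (c' : ∀ g h : G, (F h ⋙ F g) ≅ F (g * h))
    (hc' : ∀ (g h : G) (X : C),
      (c' g h).hom.app X
        = ((d g h)⁻¹).hom.app ((F g).obj ((F h).obj X)) ≫ (c g h).hom.app X) :
    ∀ (g1 g2 g3 : G) (X : C),
      (c' g1 g2).hom.app ((F g3).obj X) ≫ (c' (g1 * g2) g3).hom.app X
        = (F g1).map ((c' g2 g3).hom.app X) ≫ (c' g1 (g2 * g3)).hom.app X ≫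
            eqToHom (by rw [mul_assoc]) := by
  intro g1 g2 g3 X
  have natu : ∀ (u : Aut (𝟭 C)) {Y Z : C} (f : Y ⟶ Z),
      f ≫ u.hom.app Z = u.hom.app Y ≫ f := fun u _ _ f => by
    simpa using u.hom.naturality f
  have comm : ∀ (u v : Aut (𝟭 C)) (Y : C),
      u.hom.app Y ≫ v.hom.app Y = v.hom.app Y ≫ u.hom.app Y := fun u v Y =>
    natu v (u.hom.app Y)
  have invc : ∀ (u : Aut (𝟭 C)) (Y : C),
      (u⁻¹).hom.app Y ≫ u.hom.app Y = 𝟙 Y := fun u Y => by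
    simp [Aut.Aut_inv_def]
    exact Iso.inv_hom_id_app u Y
  have hdc : (a g1 g2 g3).hom.app ((F g1).obj ((F g2).obj ((F g3).obj X)))
      = ((d g1 g2)⁻¹).hom.app ((F g1).obj ((F g2).obj ((F g3).obj X))) ≫
          ((d (g1 * g2) g3)⁻¹).hom.app ((F g1).obj ((F g2).obj ((F g3).obj X))) ≫
          (d g1 (g2 * g3)).hom.app ((F g1).obj ((F g2).obj ((F g3).obj X))) ≫
          (ρ g1 (d g2 g3)).hom.app ((F g1).obj ((F g2).obj ((F g3).obj X))) := by
    rw [hd g1 g2 g3]; rfl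
  have hρc : (F g1).map (((d g2 g3)⁻¹).hom.app ((F g2).obj ((F g3).obj X))) ≫
      (ρ g1 (d g2 g3)).hom.app ((F g1).obj ((F g2).obj ((F g3).obj X)))
      = 𝟙 ((F g1).obj ((F g2).obj ((F g3).obj X))) := by
    rw [hρ g1 (d g2 g3), ← Functor.map_comp, invc]
    simp
  calc
    (c' g1 g2).hom.app ((F g3).obj X) ≫ (c' (g1 * g2) g3).hom.app X
      = ((d g1 g2)⁻¹).hom.app ((F g1).obj ((F g2).obj ((F g3).obj X))) ≫
          ((d (g1 * g2) g3)⁻¹).hom.app ((F g1).obj ((F g2).obj ((F g3).obj X))) ≫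
          (c g1 g2).hom.app ((F g3).obj X) ≫ (c (g1 * g2) g3).hom.app X := by
        rw [hc', hc']
        slice_lhs 2 3 => rw [natu]
        simp only [Functor.id_obj, Category.assoc]
    _ = (F g1).map (((d g2 g3)⁻¹).hom.app ((F g2).obj ((F g3).obj X))) ≫
          ((d g1 (g2 * g3))⁻¹).hom.app ((F g1).obj ((F g2).obj ((F g3).obj X))) ≫
          (c g1 g2).hom.app ((F g3).obj X) ≫ (c (g1 * g2) g3).hom.app X ≫
          (a g1 g2 g3).hom.app ((F (g1 * g2 * g3)).obj X) := by
        slice_rhs 4 5 => rw [natu]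
        slice_rhs 3 4 => rw [natu]
        simp only [Functor.id_obj]
        rw [hdc]
        simp only [Category.assoc]
        slice_rhs 5 6 => rw [comm]
        slice_rhs 4 5 => rw [comm]
        slice_rhs 3 4 => rw [comm]
        slice_rhs 2 3 => rw [comm]
        slice_rhs 1 2 => rw [hρc]
        simp only [Functor.id_obj, Category.id_comp]
        slice_rhs 1 2 => rw [comm]
        slice_rhs 2 3 => rw [comm]
        slice_rhs 3 4 => rw [invc]
        simp only [Functor.id_obj, Category.assoc, Category.id_comp]
    _ = (F g1).map ((c' g2 g3).hom.app X) ≫ (c' g1 (g2 * g3)).hom.app X ≫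
          eqToHom (by simp only [Functor.id_obj]; rw [mul_assoc]) := by
        rw [hc', hc', Functor.map_comp]
        slice_rhs 2 3 => rw [natu]
        simp only [Functor.id_obj, Category.assoc]
        rw [ha g1 g2 g3 X]
end

section
/- Let G be a group, H a normal subgroup of G, K := G/H, and π : Ĥ → H a surjective group homomorphism whose kernel A := ker π is contained in the center of Ĥ. Suppose ρ̃ : G → Aut(Ĥ) is an action of G on Ĥ by group automorphisms such that: π(ρ̃_g(x)) = g · π(x) · g⁻¹ for all g ∈ G, x ∈ Ĥ; ρ̃_h = c_h for every h ∈ H (where c_h is conjugation by any element of π⁻¹(h)); and ρ̃_g(a) = a for all g ∈ G, a ∈ A (so (G, Ĥ) is a gerbal pair). Let s : K → G be a set-theoretic section of the quotient map with s(1) = 1, set t(k,k') := s(kk')⁻¹ s(k) s(k') (which lies in H), and choose arbitrary lifts t̃(k,k') ∈ Ĥ with π(t̃(k,k')) = t(k,k'). Then for all k1,k2,k3 ∈ K the element e(k1,k2,k3) := t̃(k1,k2k3) · t̃(k2,k3) · (t̃(k1k2,k3) · ρ̃_{s(k3)⁻¹}(t̃(k1,k2)))⁻¹ belongs to A, and e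 satisfies the 3-cocycle identity e(k2,k3,k4) · e(k1,k2k3,k4) · e(k1,k2,k3) = e(k1k2,k3,k4) · e(k1,k2,k3k4) for all k1,k2,k3,k4 ∈ K. -/
/-- For a gerbal pair `(G, Ĥ)` (a central extension `π : Ĥ → H` of a normal subgroup
`H ⊴ G` together with a lift `ρ̃` of the conjugation action of `G`, restricting to
conjugation on `H` and fixing `A = ker π` pointwise), any choice of set-theoretic section
`s` of `G → K = G/H` and of lifts `t̃(k,k')` of `t(k,k') = s(kk')⁻¹ s(k) s(k')` yields
`e(k1,k2,k3) := t̃(k1,k2k3) t̃(k2,k3) (t̃(k1k2,k3) ρ̃_{s(k3)⁻¹}(t̃(k1,k2)))⁻¹`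
with values in `A`, satisfying the 3-cocycle identity. -/
theorem gerbal_pair_three_cocycle
    {G : Type*} [Group G] (H : Subgroup G) [H.Normal]
    {Hhat : Type*} [Group Hhat]
    (π : Hhat →* ↥H) (hπsurj : Function.Surjective π)
    (hcentral : π.ker ≤ Subgroup.center Hhat)
    (ρ : G →* MulAut Hhat)
    (hlift : ∀ (g : G) (x : Hhat), (↑(π (ρ g x)) : G) = g * ↑(π x) * g⁻¹)
    (hconj : ∀ y : Hhat, ρ (↑(π y) : G) = MulAut.conj y)
    (hfix : ∀ (g : G) (a : Hhat), a ∈ π.ker → ρ g a = a)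
    (s : G ⧸ H → G)
    (hs : ∀ k : G ⧸ H, (QuotientGroup.mk (s k) : G ⧸ H) = k)
    (hs1 : s 1 = 1)
    (t : G ⧸ H → G ⧸ H → Hhat)
    (ht : ∀ k k' : G ⧸ H, (↑(π (t k k')) : G) = (s (k * k'))⁻¹ * s k * s k')
    (e : G ⧸ H → G ⧸ H → G ⧸ H → Hhat)
    (he : ∀ k1 k2 k3 : G ⧸ H,
      e k1 k2 k3
        = t k1 (k2 * k3) * t k2 k3 *
            (t (k1 * k2) k3 * ρ (s k3)⁻¹ (t k1 k2))⁻¹) :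
    (∀ k1 k2 k3 : G ⧸ H, e k1 k2 k3 ∈ π.ker) ∧
    (∀ k1 k2 k3 k4 : G ⧸ H,
      e k2 k3 k4 * e k1 (k2 * k3) k4 * e k1 k2 k3
        = e (k1 * k2) k3 k4 * e k1 k2 (k3 * k4)) := by
  have hker : ∀ k1 k2 k3 : G ⧸ H, e k1 k2 k3 ∈ π.ker := by
    intro k1 k2 k3
    rw [MonoidHom.mem_ker]
    apply Subtype.ext
    have h4 := hlift (s k3)⁻¹ (t k1 k2)
    rw [ht] at h4
    rw [he]
    simp only [π.map_mul, π.map_inv, Subgroup.coe_mul, Subgroup.coe_inv,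
      OneMemClass.coe_one, ht, h4, mul_assoc]
    group
  refine ⟨hker, ?_⟩
  have hcomm : ∀ a x : Hhat, a ∈ π.ker → a * x = x * a := fun a x ha =>
    (Subgroup.mem_center_iff.mp (hcentral ha) x).symm
  have hR : ∀ a b c : G ⧸ H,
      t a (b * c) * t b c = e a b c * (t (a * b) c * ρ (s c)⁻¹ (t a b)) := by
    intro a b c
    rw [he]
    group
  have hswap : ∀ (x : Hhat) (a b : G ⧸ H),
      ρ (s (a * b))⁻¹ x * t a b = t a b * ρ (s b)⁻¹ (ρ (s a)⁻¹ x) := by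
    intro x a b
    have h1 : (s b)⁻¹ * (s a)⁻¹ = (↑(π (t a b)) : G)⁻¹ * (s (a * b))⁻¹ := by
      rw [ht]; group
    have h3 : ρ (s b)⁻¹ (ρ (s a)⁻¹ x)
        = (ρ (↑(π (t a b)) : G))⁻¹ (ρ (s (a * b))⁻¹ x) := by
      calc ρ (s b)⁻¹ (ρ (s a)⁻¹ x) = (ρ (s b)⁻¹ * ρ (s a)⁻¹) x := rfl
        _ = ρ ((s b)⁻¹ * (s a)⁻¹) x := by rw [map_mul]
        _ = (ρ ((↑(π (t a b)) : G)⁻¹) * ρ (s (a * b))⁻¹) x := by rw [h1, map_mul]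
        _ = ρ ((↑(π (t a b)) : G)⁻¹) (ρ (s (a * b))⁻¹ x) := rfl
        _ = (ρ (↑(π (t a b)) : G))⁻¹ (ρ (s (a * b))⁻¹ x) := by rw [map_inv]
    rw [h3, hconj]
    simp only [MulAut.conj_inv_apply]
    group
  have hshuf : ∀ a x y : Hhat, a ∈ π.ker → x * (a * y) = a * (x * y) := by
    intro a x y ha
    rw [← mul_assoc, ← hcomm a x ha, mul_assoc]
  intro k1 k2 k3 k4
  have way1 :
      t k1 (k2 * (k3 * k4)) * (t k2 (k3 * k4) * t k3 k4)
        = e k2 k3 k4 * e k1 (k2 * k3) k4 * e k1 k2 k3 *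
          (t (k1 * k2 * k3) k4 *
            (ρ (s k4)⁻¹ (t (k1 * k2) k3) * ρ (s k4)⁻¹ (ρ (s k3)⁻¹ (t k1 k2)))) := by
    calc t k1 (k2 * (k3 * k4)) * (t k2 (k3 * k4) * t k3 k4)
        = t k1 (k2 * (k3 * k4)) *
            (e k2 k3 k4 * (t (k2 * k3) k4 * ρ (s k4)⁻¹ (t k2 k3))) := by
          rw [hR k2 k3 k4]
      _ = e k2 k3 k4 *
            (t k1 (k2 * (k3 * k4)) * (t (k2 * k3) k4 * ρ (s k4)⁻¹ (t k2 k3))) := by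
          rw [hshuf _ _ _ (hker k2 k3 k4)]
      _ = e k2 k3 k4 *
            ((t k1 (k2 * k3 * k4) * t (k2 * k3) k4) * ρ (s k4)⁻¹ (t k2 k3)) := by
          rw [mul_assoc k2 k3 k4]; simp only [mul_assoc]
      _ = e k2 k3 k4 *
            ((e k1 (k2 * k3) k4 *
                (t (k1 * (k2 * k3)) k4 * ρ (s k4)⁻¹ (t k1 (k2 * k3)))) *
              ρ (s k4)⁻¹ (t k2 k3)) := by
          rw [hR k1 (k2 * k3) k4]
      _ = e k2 k3 k4 * e k1 (k2 * k3) k4 *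
            (t (k1 * (k2 * k3)) k4 *
              (ρ (s k4)⁻¹ (t k1 (k2 * k3)) * ρ (s k4)⁻¹ (t k2 k3))) := by
          simp only [mul_assoc]
      _ = e k2 k3 k4 * e k1 (k2 * k3) k4 *
            (t (k1 * (k2 * k3)) k4 *
              ρ (s k4)⁻¹ (t k1 (k2 * k3) * t k2 k3)) := by
          rw [map_mul]
      _ = e k2 k3 k4 * e k1 (k2 * k3) k4 *
            (t (k1 * (k2 * k3)) k4 *
              ρ (s k4)⁻¹ (e k1 k2 k3 *
                (t (k1 * k2) k3 * ρ (s k3)⁻¹ (t k1 k2)))) := by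
          rw [hR k1 k2 k3]
      _ = e k2 k3 k4 * e k1 (k2 * k3) k4 *
            (t (k1 * (k2 * k3)) k4 *
              (e k1 k2 k3 *
                (ρ (s k4)⁻¹ (t (k1 * k2) k3) * ρ (s k4)⁻¹ (ρ (s k3)⁻¹ (t k1 k2))))) := by
          rw [map_mul, map_mul, hfix _ _ (hker k1 k2 k3)]
      _ = e k2 k3 k4 * e k1 (k2 * k3) k4 * e k1 k2 k3 *
            (t (k1 * k2 * k3) k4 *
              (ρ (s k4)⁻¹ (t (k1 * k2) k3) * ρ (s k4)⁻¹ (ρ (s k3)⁻¹ (t k1 k2)))) := by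
          rw [hshuf _ _ _ (hker k1 k2 k3), mul_assoc k1 k2 k3]
          simp only [mul_assoc]
  have way2 :
      t k1 (k2 * (k3 * k4)) * (t k2 (k3 * k4) * t k3 k4)
        = e k1 k2 (k3 * k4) * e (k1 * k2) k3 k4 *
          (t (k1 * k2 * k3) k4 *
            (ρ (s k4)⁻¹ (t (k1 * k2) k3) * ρ (s k4)⁻¹ (ρ (s k3)⁻¹ (t k1 k2)))) := by
    calc t k1 (k2 * (k3 * k4)) * (t k2 (k3 * k4) * t k3 k4)
        = (t k1 (k2 * (k3 * k4)) * t k2 (k3 * k4)) * t k3 k4 := by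
          rw [mul_assoc]
      _ = (e k1 k2 (k3 * k4) *
            (t (k1 * k2) (k3 * k4) * ρ (s (k3 * k4))⁻¹ (t k1 k2))) * t k3 k4 := by
          rw [hR k1 k2 (k3 * k4)]
      _ = e k1 k2 (k3 * k4) *
            (t (k1 * k2) (k3 * k4) * (ρ (s (k3 * k4))⁻¹ (t k1 k2) * t k3 k4)) := by
          simp only [mul_assoc]
      _ = e k1 k2 (k3 * k4) *
            ((t (k1 * k2) (k3 * k4) * t k3 k4) *
              ρ (s k4)⁻¹ (ρ (s k3)⁻¹ (t k1 k2))) := by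
          rw [hswap (t k1 k2) k3 k4]; simp only [mul_assoc]
      _ = e k1 k2 (k3 * k4) *
            ((e (k1 * k2) k3 k4 *
                (t (k1 * k2 * k3) k4 * ρ (s k4)⁻¹ (t (k1 * k2) k3))) *
              ρ (s k4)⁻¹ (ρ (s k3)⁻¹ (t k1 k2))) := by
          rw [hR (k1 * k2) k3 k4]
      _ = e k1 k2 (k3 * k4) * e (k1 * k2) k3 k4 *
            (t (k1 * k2 * k3) k4 *
              (ρ (s k4)⁻¹ (t (k1 * k2) k3) * ρ (s k4)⁻¹ (ρ (s k3)⁻¹ (t k1 k2)))) := by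
          simp only [mul_assoc]
  have hmain :
      e k2 k3 k4 * e k1 (k2 * k3) k4 * e k1 k2 k3
        = e k1 k2 (k3 * k4) * e (k1 * k2) k3 k4 :=
    mul_right_cancel (way1.symm.trans way2)
  rw [hmain, hcomm _ _ (hker k1 k2 (k3 * k4))]
end

section
/- Let G be a group, H a normal subgroup of G, and π : Ĥ → H a surjective group homomorphism whose kernel A := ker π is contained in the center of Ĥ. Suppose for each g ∈ G we are given a group automorphism ρ̃_g of Ĥ such that π(ρ̃_g(x)) = g · π(x) · g⁻¹ for all x ∈ Ĥ, ρ̃_g(a) = a for all a ∈ A, ρ̃_1 = id, and ρ̃_{gh} = ρ̃_g ∘ c_h for all g ∈ G, h ∈ H (where c_h is conjugation by any element of π⁻¹(h)). Then: (a) for all g,g' ∈ G and x ∈ Ĥ the element ρ̃_g(ρ̃_{g'}(x)) · ρ̃_{gg'}(x)⁻¹ lies in A and depends only on π(x), and the resulting map b̄(g,g') : H → A, b̄(g,g')(π(x)) := ρ̃_g(ρ̃_{g'}(x)) · ρ̃_{gg'}(x)⁻¹, is a group homomorphism; (b) b̄(hg, g') = b̄(g, g'h) = b̄(g,g') for all g,g'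 ∈ G and h ∈ H; (c) for all g,g',g'' ∈ G and h ∈ H: b̄(g',g'')(h) · b̄(gg',g'')(h)⁻¹ · b̄(g,g'g'')(h) · (b̄(g,g')(g'' h g''⁻¹))⁻¹ = 1. -/
/-- Given per-element liftings `ρ̃_g` of the conjugation action of `G` on a normal subgroup
`H` to a central extension `π : Ĥ → H`, satisfying `ρ̃_1 = id` and `ρ̃_{gh} = ρ̃_g ∘ c_h`
for `h ∈ H`, the failure of `g ↦ ρ̃_g` to be a homomorphism is measured by homomorphisms
`b̄(g,g') : H → A` which form a 2-cochain on `K = G/H` satisfying the twisted 2-cocycle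
identity. -/
theorem gerbal_pair_lifting_obstruction_two_cocycle
    {G : Type*} [Group G] (H : Subgroup G) [H.Normal]
    {Hhat : Type*} [Group Hhat]
    (π : Hhat →* ↥H) (hπsurj : Function.Surjective π)
    (hcentral : π.ker ≤ Subgroup.center Hhat)
    (ρ : G → MulAut Hhat)
    (hlift : ∀ (g : G) (x : Hhat), (↑(π (ρ g x)) : G) = g * ↑(π x) * g⁻¹)
    (hfix : ∀ (g : G) (a : Hhat), a ∈ π.ker → ρ g a = a)
    (hone : ρ 1 = 1)
    (hcomp : ∀ (g : G) (y : Hhat), ρ (g * (↑(π y) : G)) = ρ g * MulAut.conj y)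
    (b : G → G → Hhat → Hhat)
    (hb : ∀ (g g' : G) (x : Hhat),
      b g g' x = ρ g (ρ g' x) * (ρ (g * g') x)⁻¹) :
    -- (a) values in A, well-defined on H, and a homomorphism in the H-variable
    (∀ (g g' : G) (x : Hhat), b g g' x ∈ π.ker) ∧
    (∀ (g g' : G) (x x' : Hhat), π x = π x' → b g g' x = b g g' x') ∧
    (∀ (g g' : G) (x x' : Hhat), b g g' (x * x') = b g g' x * b g g' x') ∧
    -- (b) invariance under translating the arguments by elements of H
    (∀ (g g' : G) (y : Hhat) (x : Hhat),
      b ((↑(π y) : G) * g) g' x = b g g' x ∧ b g (g' * (↑(π y) : G)) x = b g g' x) ∧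
    -- (c) the twisted 2-cocycle identity
    (∀ (g g' g'' : G) (x z : Hhat),
      (↑(π z) : G) = g'' * (↑(π x) : G) * g''⁻¹ →
        b g' g'' x * (b (g * g') g'' x)⁻¹ * b g (g' * g'') x * (b g g' z)⁻¹ = 1) := by
  have hπeq : ∀ (g g' : G) (x : Hhat), π (ρ g (ρ g' x)) = π (ρ (g * g') x) := by
    intro g g' x
    apply Subtype.ext
    rw [hlift, hlift, hlift]
    group
  have hker : ∀ (g g' : G) (x : Hhat), b g g' x ∈ π.ker := by
    intro g g' x
    rw [MonoidHom.mem_ker, hb, map_mul, map_inv, hπeq, mul_inv_cancel]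
  have hcomm : ∀ (g g' : G) (x z : Hhat), b g g' x * z = z * b g g' x := by
    intro g g' x z
    exact (Subgroup.mem_center_iff.mp (hcentral (hker g g' x)) z).symm
  have hwd : ∀ (g g' : G) (x x' : Hhat), π x = π x' → b g g' x = b g g' x' := by
    intro g g' x x' h
    have ha : x⁻¹ * x' ∈ π.ker := by
      rw [MonoidHom.mem_ker, map_mul, map_inv, h, inv_mul_cancel]
    have hx' : x' = x * (x⁻¹ * x') := by group
    have h1 : ∀ (u : G), ρ u x' = ρ u x * (x⁻¹ * x') := by
      intro u
      conv_lhs => rw [hx']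
      rw [map_mul, hfix u _ ha]
    rw [hb g g' x', h1, h1, map_mul, hfix g _ ha, hb g g' x]
    group
  have hhom : ∀ (g g' : G) (x x' : Hhat), b g g' (x * x') = b g g' x * b g g' x' := by
    intro g g' x x'
    calc b g g' (x * x')
        = ρ g (ρ g' x) * (ρ g (ρ g' x') * (ρ (g * g') x')⁻¹) * (ρ (g * g') x)⁻¹ := by
          rw [hb g g' (x * x'), map_mul, map_mul, map_mul]; group
      _ = ρ g (ρ g' x) * b g g' x' * (ρ (g * g') x)⁻¹ := by rw [hb g g' x']
      _ = ρ g (ρ g' x) * (ρ (g * g') x)⁻¹ * b g g' x' := by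
          rw [mul_assoc, hcomm g g' x', ← mul_assoc]
      _ = b g g' x * b g g' x' := by rw [hb g g' x]
  have hbone : ∀ (g g' : G), b g g' 1 = 1 := by
    intro g g'; rw [hb]; simp
  have hbinv : ∀ (g g' : G) (x : Hhat), b g g' x⁻¹ = (b g g' x)⁻¹ := by
    intro g g' x
    have h := hhom g g' x x⁻¹
    rw [mul_inv_cancel, hbone] at h
    exact eq_inv_of_mul_eq_one_right h.symm
  have conj_central : ∀ (c w t : Hhat), (∀ s, c * s = s * c) →
      (c * w) * t * (c * w)⁻¹ = w * t * w⁻¹ := by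
    intro c w t hc
    calc (c * w) * t * (c * w)⁻¹ = c * (w * t * w⁻¹) * c⁻¹ := by group
      _ = (w * t * w⁻¹) * c * c⁻¹ := by rw [hc]
      _ = w * t * w⁻¹ := by group
  have hcomp' : ∀ (g : G) (y z : Hhat), ρ ((↑(π y) : G) * g) z = y * ρ g z * y⁻¹ := by
    intro g y z
    have h1 : (↑(π y) : G) * g = g * ↑(π (ρ g⁻¹ y)) := by
      rw [hlift]; group
    have h2 : ρ g (ρ g⁻¹ y) = b g g⁻¹ y * y := by
      rw [hb g g⁻¹ y, mul_inv_cancel, hone]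
      simp
    rw [h1, hcomp]
    simp only [MulAut.mul_apply, MulAut.conj_apply, map_mul, map_inv]
    rw [h2]
    exact conj_central _ _ _ (hcomm g g⁻¹ y)
  refine ⟨hker, hwd, hhom, ?_, ?_⟩
  · intro g g' y x
    constructor
    · have sand : ∀ (A B : Hhat), (∀ s, (A * B⁻¹) * s = s * (A * B⁻¹)) →
          y * A * y⁻¹ * (y * B * y⁻¹)⁻¹ = A * B⁻¹ := by
        intro A B hc
        calc y * A * y⁻¹ * (y * B * y⁻¹)⁻¹ = y * (A * B⁻¹) * y⁻¹ := by group
          _ = (A * B⁻¹) * y * y⁻¹ := by rw [hc]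
          _ = A * B⁻¹ := by group
      rw [hb ((↑(π y) : G) * g) g' x, mul_assoc (↑(π y) : G) g g',
        hcomp' g y, hcomp' (g * g') y, hb g g' x]
      exact sand _ _ (fun s => by rw [← hb g g' x]; exact hcomm g g' x s)
    · have h1 : ρ (g' * (↑(π y) : G)) x = ρ g' (y * x * y⁻¹) := by
        rw [hcomp g' y]; rfl
      have h2 : ρ (g * (g' * (↑(π y) : G))) x = ρ (g * g') (y * x * y⁻¹) := by
        rw [← mul_assoc g g' (↑(π y) : G), hcomp (g * g') y]; rfl
      rw [hb g (g' * (↑(π y) : G)) x, h1, h2, ← hb g g' (y * x * y⁻¹)]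
      rw [hhom g g' (y * x) y⁻¹, hhom g g' y x, hbinv g g' y]
      calc b g g' y * b g g' x * (b g g' y)⁻¹
          = b g g' x * b g g' y * (b g g' y)⁻¹ := by rw [hcomm g g' y (b g g' x)]
        _ = b g g' x := by group
  · intro g g' g'' x z hz
    have hzx : π z = π (ρ g'' x) := by
      apply Subtype.ext
      rw [hlift, hz]
    rw [hwd g g' z (ρ g'' x) hzx]
    have hC : ∀ (u v : G) (w t : Hhat), Commute (b u v w) t := fun u v w t => hcomm u v w t
    have key : b g' g'' x * b g (g' * g'') x = b g g' (ρ g'' x) * b (g * g') g'' x := by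
      have e1 : b g' g'' x = ρ g (ρ g' (ρ g'' x)) * (ρ g (ρ (g' * g'') x))⁻¹ := by
        rw [← hfix g (b g' g'' x) (hker g' g'' x), hb g' g'' x, map_mul, map_inv]
      rw [e1, hb g (g' * g'') x, hb g g' (ρ g'' x), hb (g * g') g'' x, ← mul_assoc g g' g'']
      group
    calc b g' g'' x * (b (g * g') g'' x)⁻¹ * b g (g' * g'') x * (b g g' (ρ g'' x))⁻¹
        = (b (g * g') g'' x)⁻¹ * (b g' g'' x * b g (g' * g'') x) * (b g g' (ρ g'' x))⁻¹ := by
          rw [(hC g' g'' x (b (g * g') g'' x)).inv_right.eq]; group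
      _ = (b (g * g') g'' x)⁻¹ * (b g g' (ρ g'' x) * b (g * g') g'' x) * (b g g' (ρ g'' x))⁻¹ := by
          rw [key]
      _ = 1 := by
          rw [(hC g g' (ρ g'' x) (b (g * g') g'' x)).eq]; group
end

section
/- Let G be a group, H a normal subgroup of G, and π : Ĥ → H a surjective group homomorphism whose kernel A := ker π is contained in the center of Ĥ. Suppose ρ̃ and ρ̃' are two actions of G on Ĥ by group automorphisms, each satisfying: π(ρ̃_g(x)) = g · π(x) · g⁻¹ for all g, x; ρ̃_h = c_h for all h ∈ H (conjugation by any lift); and ρ̃_g(a) = a for all a ∈ A (and likewise for ρ̃'). Then: (a) for each g ∈ G and x ∈ Ĥ, the element ρ̃'_g(x) · ρ̃_g(x)⁻¹ lies in A and depends only on π(x), and the resulting map ū(g) : H → A, ū(g)(π(x)) := ρ̃'_g(x) · ρ̃_g(x)⁻¹, is a group homomorphism; (b) ū(gh) = ū(g) for all g ∈ G and h ∈ H, so ū descends to a function on K := G/H; (c) ū(gg')(h) = ū(g)(g' h g'⁻¹) · ū(g')(h) for all g,g' ∈ G and h ∈ H (i.e. ū is a 1-cocycle with values in Hom(H,A)).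 -/
/-- Two gerbal-pair liftings `ρ̃`, `ρ̃'` of the conjugation action of `G` on a normal
subgroup `H` to a central extension `π : Ĥ → H` differ by a 1-cocycle
`ū : K → Hom(H, A)`, where `K = G/H` and `A = ker π`. -/
theorem gerbal_pair_liftings_torsor_one_cocycle
    {G : Type*} [Group G] (H : Subgroup G) [H.Normal]
    {Hhat : Type*} [Group Hhat]
    (π : Hhat →* ↥H) (hπsurj : Function.Surjective π)
    (hcentral : π.ker ≤ Subgroup.center Hhat)
    (ρ ρ' : G →* MulAut Hhat)
    (hlift : ∀ (g : G) (x : Hhat), (↑(π (ρ g x)) : G) = g * ↑(π x) * g⁻¹)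
    (hconj : ∀ y : Hhat, ρ (↑(π y) : G) = MulAut.conj y)
    (hfix : ∀ (g : G) (a : Hhat), a ∈ π.ker → ρ g a = a)
    (hlift' : ∀ (g : G) (x : Hhat), (↑(π (ρ' g x)) : G) = g * ↑(π x) * g⁻¹)
    (hconj' : ∀ y : Hhat, ρ' (↑(π y) : G) = MulAut.conj y)
    (hfix' : ∀ (g : G) (a : Hhat), a ∈ π.ker → ρ' g a = a)
    (u : G → Hhat → Hhat)
    (hu : ∀ (g : G) (x : Hhat), u g x = ρ' g x * (ρ g x)⁻¹) :
    -- (a) values in A, well-defined on H, and a homomorphism in the H-variable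
    (∀ (g : G) (x : Hhat), u g x ∈ π.ker) ∧
    (∀ (g : G) (x x' : Hhat), π x = π x' → u g x = u g x') ∧
    (∀ (g : G) (x x' : Hhat), u g (x * x') = u g x * u g x') ∧
    -- (b) invariance under right translation by elements of H
    (∀ (g : G) (y : Hhat) (x : Hhat), u (g * (↑(π y) : G)) x = u g x) ∧
    -- (c) the 1-cocycle identity
    (∀ (g g' : G) (x z : Hhat),
      (↑(π z) : G) = g' * (↑(π x) : G) * g'⁻¹ →
        u (g * g') x = u g z * u g' x) := by
  have coe_inj : ∀ {h₁ h₂ : ↥H}, (↑h₁ : G) = ↑h₂ → h₁ = h₂ := fun h => Subtype.coe_injective h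
  have hπeq : ∀ (g : G) (x : Hhat), π (ρ' g x) = π (ρ g x) := fun g x =>
    coe_inj (by rw [hlift, hlift'])
  have hker : ∀ (g : G) (x : Hhat), u g x ∈ π.ker := by
    intro g x
    simp [MonoidHom.mem_ker, hu, hπeq g x]
  have hcomm : ∀ (g : G) (x b : Hhat), u g x * b = b * u g x := fun g x b =>
    (Subgroup.mem_center_iff.mp (hcentral (hker g x)) b).symm
  have conjc : ∀ (c w : Hhat), (∀ b, c * b = b * c) → w * c * w⁻¹ = c := by
    intro c w h; rw [← h w]; group
  have conjc' : ∀ (c w : Hhat), (∀ b, c * b = b * c) → c * w * c⁻¹ = w := by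
    intro c w h; rw [h w]; group
  have hwd : ∀ (g : G) (x x' : Hhat), π x = π x' → u g x = u g x' := by
    intro g x x' hxx'
    have ha : x⁻¹ * x' ∈ π.ker := by simp [MonoidHom.mem_ker, hxx']
    have hx' : x' = x * (x⁻¹ * x') := by group
    rw [hu, hu, hx', map_mul (ρ g) x (x⁻¹ * x'), map_mul (ρ' g) x (x⁻¹ * x'), hfix g _ ha, hfix' g _ ha]
    group
  refine ⟨hker, hwd, ?_, ?_, ?_⟩
  · -- (a) multiplicativity
    intro g x x'
    have h1 : ρ' g x = u g x * ρ g x := by rw [hu]; group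
    have h2 : ρ' g x' = u g x' * ρ g x' := by rw [hu]; group
    calc u g (x * x') = ρ' g (x * x') * (ρ g (x * x'))⁻¹ := hu _ _
      _ = u g x * (ρ g x * u g x' * (ρ g x)⁻¹) := by
          rw [map_mul, map_mul, h1, h2]; group
      _ = u g x * u g x' := by rw [← hcomm g x' (ρ g x), mul_inv_cancel_right]
  · -- (b) right H-invariance
    intro g y x
    have eρ : ρ (g * (↑(π y) : G)) x = ρ g y * ρ g x * (ρ g y)⁻¹ := by
      rw [map_mul ρ g (↑(π y) : G), MulAut.mul_apply, hconj y, MulAut.conj_apply,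
        map_mul, map_mul, map_inv]
    have eρ' : ρ' (g * (↑(π y) : G)) x = ρ' g y * ρ' g x * (ρ' g y)⁻¹ := by
      rw [map_mul ρ' g (↑(π y) : G), MulAut.mul_apply, hconj' y, MulAut.conj_apply,
        map_mul, map_mul, map_inv]
    have h1 : ρ' g y = u g y * ρ g y := by rw [hu]; group
    have h2 : ρ' g x = u g x * ρ g x := by rw [hu]; group
    calc u (g * (↑(π y) : G)) x
        = ρ' g y * ρ' g x * (ρ' g y)⁻¹ * (ρ g y * ρ g x * (ρ g y)⁻¹)⁻¹ := by
          rw [hu, eρ, eρ']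
      _ = ((u g y * ρ g y) * u g x * (u g y * ρ g y)⁻¹) *
            ((u g y * ρ g y) * ρ g x * (u g y * ρ g y)⁻¹) *
            (ρ g y * ρ g x * (ρ g y)⁻¹)⁻¹ := by rw [h1, h2]; group
      _ = u g x * (u g y * (ρ g y * ρ g x * (ρ g y)⁻¹) * (u g y)⁻¹) *
            (ρ g y * ρ g x * (ρ g y)⁻¹)⁻¹ := by
          rw [conjc (u g x) _ (hcomm g x)]; group
      _ = u g x * (ρ g y * ρ g x * (ρ g y)⁻¹) * (ρ g y * ρ g x * (ρ g y)⁻¹)⁻¹ := by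
          rw [conjc' (u g y) _ (hcomm g y)]
      _ = u g x := by group
  · -- (c) 1-cocycle identity
    intro g g' x z hz
    have hπw : π (ρ' g' x) = π z := coe_inj (by rw [hlift', hz])
    have hrw : ρ g' x = (u g' x)⁻¹ * ρ' g' x := by rw [hu]; group
    have hkinv : (u g' x)⁻¹ ∈ π.ker := inv_mem (hker g' x)
    calc u (g * g') x = ρ' g (ρ' g' x) * (ρ g (ρ g' x))⁻¹ := by
          rw [hu, map_mul ρ g g', map_mul ρ' g g', MulAut.mul_apply, MulAut.mul_apply]
      _ = ρ' g (ρ' g' x) * ((u g' x)⁻¹ * ρ g (ρ' g' x))⁻¹ := by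
          rw [hrw, map_mul (ρ g), hfix g _ hkinv]
      _ = (ρ' g (ρ' g' x) * (ρ g (ρ' g' x))⁻¹) * u g' x := by group
      _ = u g (ρ' g' x) * u g' x := by rw [hu g (ρ' g' x)]
      _ = u g z * u g' x := by rw [hwd g _ z hπw]
end

section
/- Let R be an associative unital ℂ-algebra (possibly noncommutative). For every g ∈ GL_∞(R) and every integer M, there exists an integer N such that tᴺR[[t]] ⊆ g(tᴹR[[t]]) and the quotient g(tᴹR[[t]])/tᴺR[[t]] is a finitely generated projective right R-module. -/
set_option synthInstance.maxHeartbeats 1000000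
set_option maxHeartbeats 2000000

noncomputable section

variable (R : Type) [Ring R]

/-- We fix once and for all the additive structure on `R((t))` used below (this avoids
typeclass-unification issues between the two definitionally equal `AddCommMonoid`
structures on `HahnSeries ℤ R` present in Mathlib). -/
instance (priority := 10000) hahnACM : AddCommMonoid (HahnSeries ℤ R) :=
  AddCommGroup.toAddCommMonoid

instance (priority := 10000) hahnModOp : Module Rᵐᵒᵖ (HahnSeries ℤ R) :=
  HahnSeries.instModule

/-- `tⁿ·R[[t]]`: the right `R`-submodule of `R((t))` of series supported in degrees
`≥ n`. -/
def lattR (n : ℤ) : Submodule Rᵐᵒᵖ (HahnSeries ℤ R) where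
  carrier := {f | ∀ i : ℤ, i < n → f.coeff i = 0}
  add_mem' := by
    intro a b ha hb i hi
    have h : (a + b).coeff i = a.coeff i + b.coeff i := rfl
    rw [h, ha i hi, hb i hi, add_zero]
  zero_mem' := by
    intro i _
    rfl
  smul_mem' := by
    intro c a ha i hi
    have h : (c • a).coeff i = c • a.coeff i := rfl
    rw [h, ha i hi, smul_zero]

/-- `gl_∞(R)`: the ring of continuous right `R`-module endomorphisms of `R((t))`
(continuity for the t-adic topology: for every `m` there is `n` with
`f(tⁿR[[t]]) ⊆ tᵐR[[t]]`). -/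
def glInfR : Subring (Module.End Rᵐᵒᵖ (HahnSeries ℤ R)) where
  carrier := {f | ∀ m : ℤ, ∃ n : ℤ, ∀ v ∈ lattR R n, f v ∈ lattR R m}
  mul_mem' := by
    intro f g hf hg m
    obtain ⟨n, hn⟩ := hf m
    obtain ⟨p, hp⟩ := hg n
    exact ⟨p, fun v hv => hn _ (hp v hv)⟩
  one_mem' := fun m => ⟨m, fun v hv => hv⟩
  add_mem' := by
    intro f g hf hg m
    obtain ⟨n1, h1⟩ := hf m
    obtain ⟨n2, h2⟩ := hg m
    refine ⟨max n1 n2, fun v hv => ?_⟩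
    have hv1 : v ∈ lattR R n1 := fun i hi => hv i (lt_of_lt_of_le hi (le_max_left _ _))
    have hv2 : v ∈ lattR R n2 := fun i hi => hv i (lt_of_lt_of_le hi (le_max_right _ _))
    exact (lattR R m).add_mem (h1 v hv1) (h2 v hv2)
  zero_mem' := fun m => ⟨m, fun v _ => (lattR R m).zero_mem⟩
  neg_mem' := by
    intro f hf m
    obtain ⟨n, hn⟩ := hf m
    refine ⟨n, fun v hv => ?_⟩
    rw [LinearMap.neg_apply]
    exact (lattR R m).neg_mem (hn v hv)

/-- `GL_∞(R)`, the group of units of `gl_∞(R)`. -/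
abbrev GLInfR := (↥(glInfR R))ˣ

namespace LatticeAux

open MulOpposite

variable {R}

lemma lattR_anti {m n : ℤ} (h : m ≤ n) : lattR R n ≤ lattR R m :=
  fun _ hv i hi => hv i (lt_of_lt_of_le hi h)

/-- The coefficient map as an additive monoid hom. -/
def coeffHom (j : ℤ) : HahnSeries ℤ R →+ R where
  toFun f := f.coeff j
  map_zero' := rfl
  map_add' _ _ := rfl

/-- Truncation keeping only degrees `≥ n`, as a right `R`-linear map. -/
def truncGE (n : ℤ) : HahnSeries ℤ R →ₗ[Rᵐᵒᵖ] HahnSeries ℤ R where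
  toFun f :=
    { coeff := fun i => if n ≤ i then f.coeff i else 0
      isPWO_support' := f.isPWO_support'.mono (fun i hi => by
        simp only [Function.mem_support] at hi ⊢
        intro h0
        apply hi
        split_ifs <;> simp [h0]) }
  map_add' a b := by
    ext j
    show (if n ≤ j then a.coeff j + b.coeff j else 0)
        = (if n ≤ j then a.coeff j else 0) + (if n ≤ j then b.coeff j else 0)
    split_ifs <;> simp
  map_smul' c a := by
    ext j
    show (if n ≤ j then c • a.coeff j else 0) = c • (if n ≤ j then a.coeff j else 0)
    split_ifs <;> simp

lemma coeff_truncGE (n i : ℤ) (f : HahnSeries ℤ R) :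
    (truncGE n f).coeff i = if n ≤ i then f.coeff i else 0 := rfl

lemma truncGE_mem (n : ℤ) (f : HahnSeries ℤ R) : truncGE n f ∈ lattR R n :=
  fun i hi => if_neg (not_le.2 hi)

lemma truncGE_eq_self {n : ℤ} {f : HahnSeries ℤ R} (hf : f ∈ lattR R n) :
    truncGE n f = f := by
  ext j
  show (if n ≤ j then f.coeff j else 0) = f.coeff j
  split_ifs with h
  · rfl
  · exact (hf j (not_le.1 h)).symm

lemma smul_single_coeff (c : R) (a j : ℤ) :
    ((op c) • HahnSeries.single a (1 : R)).coeff j = if j = a then c else 0 := by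
  have h : ((op c) • HahnSeries.single a (1 : R)).coeff j
      = (op c) • (HahnSeries.single a (1 : R)).coeff j := rfl
  rw [h, HahnSeries.coeff_single]
  split_ifs <;> simp [MulOpposite.smul_eq_mul_unop]

/-- Decomposition of a series supported in degrees `≥ P` as a finite sum of monomials
in degrees `[P, N)` plus a tail in degrees `≥ N`. -/
lemma decomp {P N : ℤ} (hPN : P ≤ N) {f : HahnSeries ℤ R} (hf : f ∈ lattR R P) :
    f = (∑ i : Fin (N - P).toNat,
          (op (f.coeff (P + (i : ℤ)))) • HahnSeries.single (P + (i : ℤ)) (1 : R))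
        + truncGE N f := by
  have hcast : (((N - P).toNat : ℤ)) = N - P := Int.toNat_of_nonneg (sub_nonneg.2 hPN)
  ext j
  have hsum : (∑ i : Fin (N - P).toNat,
      (op (f.coeff (P + (i : ℤ)))) • HahnSeries.single (P + (i : ℤ)) (1 : R)).coeff j
      = ∑ i : Fin (N - P).toNat, (if j = P + (i : ℤ) then f.coeff (P + (i : ℤ)) else 0) := by
    rw [show (∑ i : Fin (N - P).toNat,
        (op (f.coeff (P + (i : ℤ)))) • HahnSeries.single (P + (i : ℤ)) (1 : R)).coeff j
        = coeffHom j (∑ i : Fin (N - P).toNat,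
          (op (f.coeff (P + (i : ℤ)))) • HahnSeries.single (P + (i : ℤ)) (1 : R)) from rfl,
      map_sum]
    exact Finset.sum_congr rfl fun i _ => smul_single_coeff _ _ _
  have hadd : ((∑ i : Fin (N - P).toNat,
      (op (f.coeff (P + (i : ℤ)))) • HahnSeries.single (P + (i : ℤ)) (1 : R))
      + truncGE N f).coeff j
      = (∑ i : Fin (N - P).toNat,
          (op (f.coeff (P + (i : ℤ)))) • HahnSeries.single (P + (i : ℤ)) (1 : R)).coeff j
        + (truncGE N f).coeff j := rfl
  rw [hadd, hsum, coeff_truncGE]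
  rcases lt_or_ge j P with hjP | hjP
  · rw [hf j hjP, Finset.sum_eq_zero, if_neg (by omega), add_zero]
    intro i _
    exact if_neg (by omega)
  · rcases lt_or_ge j N with hjN | hjN
    · have hlt : (j - P).toNat < (N - P).toNat := by omega
      have heq : P + (((⟨(j - P).toNat, hlt⟩ : Fin (N - P).toNat) : ℤ)) = j := by
        simp only []
        omega
      rw [Fintype.sum_eq_single (⟨(j - P).toNat, hlt⟩ : Fin (N - P).toNat)
        (fun i hi => if_neg (by
          intro hji
          apply hi
          apply Fin.ext
          have : (i : ℤ) = j - P := by omega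
          omega)), if_pos heq.symm, heq, if_neg (by omega), add_zero]
    · rw [Finset.sum_eq_zero, if_pos hjN, zero_add]
      intro i _
      refine if_neg ?_
      have hi : ((i : ℕ) : ℤ) < N - P := by
        calc ((i : ℕ) : ℤ) < (((N - P).toNat : ℕ) : ℤ) := by exact_mod_cast i.isLt
        _ = N - P := hcast
      omega

lemma exists_mem_lattR (f : HahnSeries ℤ R) : ∃ P : ℤ, f ∈ lattR R P := by
  refine ⟨f.order, fun i hi => HahnSeries.coeff_eq_zero_of_lt_order hi⟩

/-- The image of a lattice under a continuous endomorphism is bounded below. -/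
lemma exists_bound (G : Module.End Rᵐᵒᵖ (HahnSeries ℤ R)) (hG : G ∈ glInfR R) (M : ℤ) :
    ∃ P : ℤ, ∀ v ∈ lattR R M, G v ∈ lattR R P := by
  classical
  obtain ⟨n0, hn0⟩ := hG 0
  set n : ℤ := max n0 M with hn
  have hMn : M ≤ n := le_max_right _ _
  choose Pb hPb using fun i : ℤ => exists_mem_lattR (R := R) (G (HahnSeries.single i 1))
  set s : Finset ℤ := insert 0 ((Finset.Ico M n).image Pb) with hs_def
  have hs : s.Nonempty := ⟨0, Finset.mem_insert_self _ _⟩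
  refine ⟨s.min' hs, fun v hv => ?_⟩
  have hcast : (((n - M).toNat : ℤ)) = n - M := Int.toNat_of_nonneg (sub_nonneg.2 hMn)
  rw [decomp hMn hv, map_add]
  apply (lattR R _).add_mem
  · rw [map_sum]
    apply Submodule.sum_mem
    intro i _
    rw [map_smul]
    apply Submodule.smul_mem
    apply lattR_anti _ (hPb (M + (i : ℤ)))
    apply Finset.min'_le
    apply Finset.mem_insert_of_mem
    apply Finset.mem_image_of_mem
    rw [Finset.mem_Ico]
    constructor
    · omega
    · have : ((i : ℕ) : ℤ) < n - M := by
        calc ((i : ℕ) : ℤ) < (((n - M).toNat : ℕ) : ℤ) := by exact_mod_cast i.isLt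
        _ = n - M := hcast
      omega
  · apply lattR_anti (Finset.min'_le _ _ (Finset.mem_insert_self _ _))
    exact hn0 _ (lattR_anti (le_max_left _ _) (truncGE_mem n v))

/-- `v ↦ ∑ i, v i • e (P + i)` as a right `R`-linear map. -/
def fromWindow (P : ℤ) (k : ℕ) (e : ℤ → HahnSeries ℤ R) :
    (Fin k → Rᵐᵒᵖ) →ₗ[Rᵐᵒᵖ] HahnSeries ℤ R where
  toFun v := ∑ i : Fin k, v i • e (P + (i : ℤ))
  map_add' a b := by
    simp only [Pi.add_apply, add_smul]
    rw [Finset.sum_add_distrib]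
  map_smul' c a := by
    simp only [Pi.smul_apply, smul_eq_mul, mul_smul, RingHom.id_apply]
    rw [Finset.smul_sum]

/-- The window of coefficients in degrees `[P, P + k)` as a right `R`-linear map. -/
def coeffWindow (P : ℤ) (k : ℕ) : HahnSeries ℤ R →ₗ[Rᵐᵒᵖ] (Fin k → Rᵐᵒᵖ) where
  toFun f i := op (f.coeff (P + (i : ℤ)))
  map_add' a b := by
    funext i
    show op (a.coeff (P + (i : ℤ)) + b.coeff (P + (i : ℤ))) = _
    rw [op_add]
    rfl
  map_smul' c a := by
    funext i
    show op (c • a.coeff (P + (i : ℤ))) = (c • fun i : Fin k => op (a.coeff (P + (i : ℤ)))) i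
    rfl

end LatticeAux


/-- For every `g ∈ GL_∞(R)` and every `M ∈ ℤ` there is `N ∈ ℤ` with
`tᴺR[[t]] ⊆ g(tᴹR[[t]])`, such that the quotient `g(tᴹR[[t]])/tᴺR[[t]]` is a finitely
generated projective right `R`-module. -/
theorem exists_lattice_in_image_with_fg_projective_quotient
    (R : Type) [Ring R] [Algebra ℂ R] (g : GLInfR R) (M : ℤ) :
    ∃ N : ℤ,
      lattR R N ≤ (lattR R M).map
        ((g : ↥(glInfR R)) : Module.End Rᵐᵒᵖ (HahnSeries ℤ R)) ∧
      Module.Finite Rᵐᵒᵖ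
        (↥((lattR R M).map ((g : ↥(glInfR R)) : Module.End Rᵐᵒᵖ (HahnSeries ℤ R))) ⧸
          ((lattR R N).comap
            ((lattR R M).map
              ((g : ↥(glInfR R)) : Module.End Rᵐᵒᵖ (HahnSeries ℤ R))).subtype)) ∧
      Module.Projective Rᵐᵒᵖ
        (↥((lattR R M).map ((g : ↥(glInfR R)) : Module.End Rᵐᵒᵖ (HahnSeries ℤ R))) ⧸
          ((lattR R N).comap
            ((lattR R M).map
              ((g : ↥(glInfR R)) : Module.End Rᵐᵒᵖ (HahnSeries ℤ R))).subtype)) := by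
  classical
  open LatticeAux MulOpposite in
  -- the endomorphisms underlying `g` and `g⁻¹`
  set G : Module.End Rᵐᵒᵖ (HahnSeries ℤ R) := ((g : ↥(glInfR R)) : Module.End Rᵐᵒᵖ (HahnSeries ℤ R)) with hG_def
  set Hm : Module.End Rᵐᵒᵖ (HahnSeries ℤ R) := (((g⁻¹ : GLInfR R) : ↥(glInfR R)) : Module.End Rᵐᵒᵖ (HahnSeries ℤ R))
    with hHm_def
  have hGH : ∀ v, G (Hm v) = v := by
    intro v
    have h1 : ((g : ↥(glInfR R)) * ((g⁻¹ : GLInfR R) : ↥(glInfR R))) = 1 := g.mul_inv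
    have h2 : G * Hm = 1 := congrArg Subtype.val h1
    calc G (Hm v) = (G * Hm) v := rfl
    _ = v := by rw [h2]; rfl
  have hHG : ∀ v, Hm (G v) = v := by
    intro v
    have h1 : (((g⁻¹ : GLInfR R) : ↥(glInfR R)) * (g : ↥(glInfR R))) = 1 := g.inv_mul
    have h2 : Hm * G = 1 := congrArg Subtype.val h1
    calc Hm (G v) = (Hm * G) v := rfl
    _ = v := by rw [h2]; rfl
  -- a lower bound for the image lattice
  obtain ⟨P0, hP0⟩ := exists_bound G (g : ↥(glInfR R)).2 M
  -- continuity of g⁻¹ at M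
  obtain ⟨N0, hN0⟩ := exists_bound Hm ((g⁻¹ : GLInfR R) : ↥(glInfR R)).2 M
  obtain ⟨N1, hN1⟩ := ((g⁻¹ : GLInfR R) : ↥(glInfR R)).2 M
  set N : ℤ := max N1 P0 with hN_def
  have hP0N : P0 ≤ N := le_max_right _ _
  set L : Submodule Rᵐᵒᵖ (HahnSeries ℤ R) := (lattR R M).map G with hL_def
  -- the image lattice contains tᴺR[[t]]
  have hNL : lattR R N ≤ L := by
    intro v hv
    refine ⟨Hm v, hN1 v (lattR_anti (le_max_left _ _) hv), hGH v⟩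
  -- elements of L are supported in degrees ≥ P0
  have hLP0 : ∀ x ∈ L, x ∈ lattR R P0 := by
    rintro x ⟨w, hw, rfl⟩
    exact hP0 w hw
  -- the retraction r = G ∘ trunc_M ∘ Hm
  set rE : Module.End Rᵐᵒᵖ (HahnSeries ℤ R) := G ∘ₗ (truncGE M) ∘ₗ Hm with hrE_def
  have hrL : ∀ v, rE v ∈ L := fun v => ⟨truncGE M (Hm v), truncGE_mem _ _, rfl⟩
  have hrid : ∀ x ∈ L, rE x = x := by
    rintro x ⟨w, hw, rfl⟩
    show G (truncGE M (Hm (G w))) = G w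
    rw [hHG w, truncGE_eq_self hw]
  set K : Submodule Rᵐᵒᵖ ↥L := (lattR R N).comap L.subtype with hK_def
  set k : ℕ := (N - P0).toNat with hk_def
  -- the section L/tᴺ → Rᵏ
  have hσK : ∀ x ∈ K, (coeffWindow P0 k).comp L.subtype x = 0 := by
    intro x hx
    funext i
    have hcast : ((k : ℕ) : ℤ) = N - P0 := Int.toNat_of_nonneg (sub_nonneg.2 hP0N)
    have hlt : P0 + ((i : ℕ) : ℤ) < N := by
      have : ((i : ℕ) : ℤ) < (k : ℤ) := by exact_mod_cast i.isLt
      omega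
    have h0 : (x : HahnSeries ℤ R).coeff (P0 + (i : ℤ)) = 0 := hx _ hlt
    show op ((x : HahnSeries ℤ R).coeff (P0 + (i : ℤ))) = 0
    rw [h0]
    rfl
  set s : (↥L ⧸ K) →ₗ[Rᵐᵒᵖ] (Fin k → Rᵐᵒᵖ) :=
    K.liftQ ((coeffWindow P0 k).comp L.subtype) (fun x hx => hσK x hx) with hs_def
  -- the projection Rᵏ → L/tᴺ
  set τ0 : (Fin k → Rᵐᵒᵖ) →ₗ[Rᵐᵒᵖ] HahnSeries ℤ R :=
    rE ∘ₗ fromWindow P0 k (fun j => HahnSeries.single j (1 : R)) with hτ0_def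
  set τ : (Fin k → Rᵐᵒᵖ) →ₗ[Rᵐᵒᵖ] ↥L :=
    LinearMap.codRestrict L τ0 (fun v => hrL _) with hτ_def
  set φ : (Fin k → Rᵐᵒᵖ) →ₗ[Rᵐᵒᵖ] (↥L ⧸ K) := K.mkQ.comp τ with hφ_def
  -- the splitting identity
  have key : φ.comp s = LinearMap.id := by
    apply LinearMap.ext
    intro q
    obtain ⟨x, rfl⟩ := K.mkQ_surjective q
    have hx : (x : HahnSeries ℤ R) ∈ lattR R P0 := hLP0 _ x.2
    have hdec := decomp hP0N hx
    have hS : τ0 ((coeffWindow P0 k) (x : HahnSeries ℤ R))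
        = rE ((x : HahnSeries ℤ R) - truncGE N (x : HahnSeries ℤ R)) := by
      have : fromWindow P0 k (fun j => HahnSeries.single j (1 : R))
          ((coeffWindow P0 k) (x : HahnSeries ℤ R))
          = (x : HahnSeries ℤ R) - truncGE N (x : HahnSeries ℤ R) := by
        rw [eq_sub_iff_add_eq]
        exact hdec.symm
      rw [hτ0_def, LinearMap.comp_apply, this]
    have hrx : rE (x : HahnSeries ℤ R) = (x : HahnSeries ℤ R) := hrid _ x.2
    have hrt : rE (truncGE N (x : HahnSeries ℤ R)) = truncGE N (x : HahnSeries ℤ R) :=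
      hrid _ (hNL (truncGE_mem _ _))
    show Submodule.Quotient.mk (τ ((coeffWindow P0 k).comp L.subtype x))
        = (Submodule.Quotient.mk x : ↥L ⧸ K)
    rw [Submodule.Quotient.eq]
    have hval : ((τ ((coeffWindow P0 k).comp L.subtype x) - x : ↥L) : HahnSeries ℤ R)
        = τ0 ((coeffWindow P0 k) (x : HahnSeries ℤ R)) - (x : HahnSeries ℤ R) := rfl
    show ((τ ((coeffWindow P0 k).comp L.subtype x) - x : ↥L) : HahnSeries ℤ R) ∈ lattR R N
    rw [hval, hS, map_sub, hrx, hrt]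
    have : (x : HahnSeries ℤ R) - truncGE N (x : HahnSeries ℤ R) - (x : HahnSeries ℤ R)
        = -(truncGE N (x : HahnSeries ℤ R)) := by abel
    rw [this]
    exact (lattR R N).neg_mem (truncGE_mem _ _)
  have hφsurj : Function.Surjective φ := by
    intro q
    exact ⟨s q, LinearMap.ext_iff.mp key q⟩
  refine ⟨N, hNL, Module.Finite.of_surjective φ hφsurj, Module.Projective.of_split s φ key⟩

end
end
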